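/- Let (F_t)_{t∈ℕ₀} be a filtration, let δ_t ≥ 0 be F_t-measurable random variables with Σ_{t=0}^∞ δ_t² = ∞ almost surely, let p₀ ∈ (0,1] be a constant, and fix ε ∈ (0,1). Let γ̃ be the smallest positive integer with e^{−γ̃ p₀} < ε and set θ_t := min(1, δ_t)/γ̃. Let η_t ∈ (0,1] be F_t-measurable random variables with Σ_{t=0}^∞ η_t δ_t² = ∞ almost surely. Suppose P = (P_t)_{t∈ℕ₀} is a [0,1]-valued adapted process with P₀ = p₀ such that for every t there is a [0,1]-valued F_{t+1}-measurable random variable X_{t+1} with E_t[X_{t+1}] − P_t ≥ δ_t·P_t·(1 − P_t) almost surely and P_{t+1} = P_t + η_t θ_t (X_{t+1} − P_t). Then P_t converges almost surely and ℙ( lim_{t→∞} P_t = 1 ) > 1 − ε. -/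

import Mathlib

open MeasureTheory Filter Set
open scoped ENNReal NNReal

set_option maxHeartbeats 1000000


lemma exp_neg_le (c : ℝ) (hc0 : 0 ≤ c) (hc1 : c ≤ 1) : Real.exp (-c) ≤ 1 - c / 2 := by
  have h1 : 1 + c ≤ Real.exp c := by linarith [Real.add_one_le_exp c]
  have hpos : (0:ℝ) < 1 + c := by linarith
  have h2 : Real.exp (-c) ≤ (1 + c)⁻¹ := by
    rw [Real.exp_neg]
    exact inv_anti₀ hpos h1
  have h3 : (1 + c)⁻¹ ≤ 1 - c / 2 := by
    rw [inv_le_iff_one_le_mul₀ hpos]  -- guess name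
    nlinarith
  linarith

lemma key_ineq (p d c : ℝ) (hp0 : 0 ≤ p) (hp1 : p ≤ 1) (hd : 0 ≤ d)
    (hc0 : 0 ≤ c) (hc1 : c ≤ 1) (hcd : c ≤ d) :
    1 - Real.exp (-(c * p)) ≤ (p + d * p * (1 - p)) * (1 - Real.exp (-c)) := by
  set a : ℝ := 1 - Real.exp (-c) with ha
  have ha0 : 0 ≤ a := by
    have := Real.exp_le_one_iff.mpr (by linarith : -c ≤ 0)
    simpa [ha] using this
  set F : ℝ → ℝ := fun x => a * (x + d * (x - x ^ 2)) - 1 + Real.exp (-(c * x)) with hF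
  have hF' : ∀ x, HasDerivAt F (a * (1 + d * (1 - 2 * x)) + -c * Real.exp (-(c * x))) x := by
    intro x
    have h1 : HasDerivAt (fun x : ℝ => -(c * x)) (-c) x := by
      simpa [Pi.neg_def] using ((hasDerivAt_id x).const_mul c).neg
    have h2 : HasDerivAt (fun x : ℝ => Real.exp (-(c * x))) (-c * Real.exp (-(c * x))) x := by
      simpa [mul_comm, Function.comp_def] using (Real.hasDerivAt_exp (-(c * x))).comp x h1
    have h3 : HasDerivAt (fun x : ℝ => a * (x + d * (x - x ^ 2)) - 1)
        (a * (1 + d * (1 - 2 * x))) x := by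
      have : HasDerivAt (fun x : ℝ => x + d * (x - x ^ 2)) (1 + d * (1 - 2 * x)) x := by
        have hx2 : HasDerivAt (fun x : ℝ => x - x ^ 2) (1 - 2 * x) x := by
          simpa [Pi.sub_def] using (hasDerivAt_id x).sub (hasDerivAt_pow 2 x)
        simpa [Pi.add_def] using (hasDerivAt_id x).add (hx2.const_mul d)
      simpa using (this.const_mul a).sub_const 1
    simpa [hF, Pi.add_def] using h3.add h2
  have hderiv : deriv F = fun x => a * (1 + d * (1 - 2 * x)) + -c * Real.exp (-(c * x)) :=
    funext fun x => (hF' x).deriv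
  have hF'' : ∀ x, HasDerivAt (deriv F) (a * (d * (-2)) + c ^ 2 * Real.exp (-(c * x))) x := by
    intro x
    rw [hderiv]
    have h1 : HasDerivAt (fun x : ℝ => -(c * x)) (-c) x := by
      simpa [Pi.neg_def] using ((hasDerivAt_id x).const_mul c).neg
    have h2 : HasDerivAt (fun x : ℝ => Real.exp (-(c * x))) (-c * Real.exp (-(c * x))) x := by
      simpa [mul_comm, Function.comp_def] using (Real.hasDerivAt_exp (-(c * x))).comp x h1
    have h3 : HasDerivAt (fun x : ℝ => a * (1 + d * (1 - 2 * x))) (a * (d * (-2))) x := by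
      have : HasDerivAt (fun x : ℝ => 1 + d * (1 - 2 * x)) (d * (-2)) x := by
        have : HasDerivAt (fun x : ℝ => 1 - 2 * x) (-2 : ℝ) x := by
          simpa [Pi.sub_def] using (hasDerivAt_const x (1:ℝ)).sub ((hasDerivAt_id x).const_mul 2)
        simpa using (this.const_mul d).const_add 1
      simpa using this.const_mul a
    have h4 : HasDerivAt (fun x : ℝ => -c * Real.exp (-(c * x)))
        (c ^ 2 * Real.exp (-(c * x))) x := by
      have := h2.const_mul (-c)
      exact this.congr_deriv (by ring)
    exact h3.add h4
  have hconc : ConcaveOn ℝ (Icc (0:ℝ) 1) F := by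
    apply concaveOn_of_deriv2_nonpos (convex_Icc 0 1)
    · exact Continuous.continuousOn (by fun_prop)
    · intro x hx; exact ((hF' x).differentiableAt).differentiableWithinAt
    · intro x hx; exact ((hF'' x).differentiableAt).differentiableWithinAt
    · intro x hx
      rw [interior_Icc] at hx
      have hx0 : 0 < x := hx.1
      have : deriv^[2] F x = a * (d * (-2)) + c ^ 2 * Real.exp (-(c * x)) := by
        simp only [Function.iterate_succ, Function.iterate_zero, Function.comp_apply, id_eq]
        exact (hF'' x).deriv
      rw [this]
      have hexp : Real.exp (-(c * x)) ≤ 1 :=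
        Real.exp_le_one_iff.mpr (by nlinarith)
      have hca : c ≤ 2 * a := by
        have := exp_neg_le c hc0 hc1
        simp only [ha]; linarith
      nlinarith [sq_nonneg c, mul_nonneg hc0 hd]
  have hF0 : F 0 = 0 := by simp [hF]
  have hF1 : F 1 = 0 := by
    simp only [hF]
    have : -(c * 1) = -c := by ring
    rw [this]; simp only [ha]; ring
  have hmem0 : (0:ℝ) ∈ Icc (0:ℝ) 1 := by constructor <;> norm_num
  have hmem1 : (1:ℝ) ∈ Icc (0:ℝ) 1 := by constructor <;> norm_num
  have := hconc.2 hmem0 hmem1 (by linarith : (0:ℝ) ≤ 1 - p) (by linarith : (0:ℝ) ≤ p)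
    (by ring : (1 - p) + p = 1)
  rw [hF0, hF1] at this
  simp only [smul_eq_mul, mul_zero, add_zero, smul_zero, mul_one, zero_add] at this
  have hFp : 0 ≤ F p := by
    have harg : (1 - p) * 0 + p * 1 = p := by ring
    calc (0:ℝ) = (1-p) * 0 + p * 0 := by ring
    _ ≤ F ((1-p) • (0:ℝ) + p • (1:ℝ)) := by simpa using this
    _ = F p := by norm_num
  have : F p = a * (p + d * (p - p ^ 2)) - 1 + Real.exp (-(c * p)) := rfl
  nlinarith [hFp]


lemma chord_aux (c p x : ℝ) (hx0 : 0 ≤ x) (hx1 : x ≤ 1) :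
    Real.exp (-(c * (x - p))) ≤
      Real.exp (c * p) * (1 - x) + Real.exp (c * p - c) * x := by
  have h := convexOn_exp.2 (mem_univ (c * p)) (mem_univ (c * p - c))
    (by linarith : (0:ℝ) ≤ 1 - x) hx0 (by ring)
  have harg : (1 - x) • (c * p) + x • (c * p - c) = -(c * (x - p)) := by
    simp only [smul_eq_mul]; ring
  rw [harg] at h
  simpa only [smul_eq_mul, mul_comm] using h

lemma step1_aux (γ ηv δv p x : ℝ) (hγ : 1 ≤ γ) (hη : 0 < ηv) (hη1 : ηv ≤ 1)
    (hδ : 0 ≤ δv) (hx0 : 0 ≤ x) (hx1 : x ≤ 1) :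
    Real.exp (-γ * (p + ηv * (min 1 δv / γ) * (x - p))) ≤
      Real.exp (-γ * p) * Real.exp (ηv * min 1 δv * p) *
        (1 - (1 - Real.exp (-(ηv * min 1 δv))) * x) := by
  set c : ℝ := ηv * min 1 δv with hc
  have hγ0 : γ ≠ 0 := by linarith
  have h1 : -γ * (p + ηv * (min 1 δv / γ) * (x - p)) = -γ * p + -(c * (x - p)) := by
    field_simp [hc]; ring
  rw [h1, Real.exp_add]
  have h2 := chord_aux c p x hx0 hx1
  have h3 : Real.exp (c * p) * (1 - x) + Real.exp (c * p - c) * x =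
      Real.exp (c * p) * (1 - (1 - Real.exp (-c)) * x) := by
    rw [show c * p - c = c * p + -c by ring, Real.exp_add]; ring
  rw [h3] at h2
  have h4 := mul_le_mul_of_nonneg_left h2 (Real.exp_pos (-γ * p)).le
  calc Real.exp (-γ * p) * Real.exp (-(c * (x - p)))
      ≤ Real.exp (-γ * p) * (Real.exp (c * p) * (1 - (1 - Real.exp (-c)) * x)) := h4
    _ = Real.exp (-γ * p) * Real.exp (c * p) * (1 - (1 - Real.exp (-c)) * x) := by ring

lemma step2_aux (γ ηv δv p : ℝ) (hη : 0 < ηv) (hη1 : ηv ≤ 1)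
    (hδ : 0 ≤ δv) (hp0 : 0 ≤ p) (hp1 : p ≤ 1) :
    Real.exp (-γ * p) * Real.exp (ηv * min 1 δv * p) *
      (1 - (1 - Real.exp (-(ηv * min 1 δv))) * (p + δv * (p * (1 - p)))) ≤
      Real.exp (-γ * p) := by
  set c : ℝ := ηv * min 1 δv with hc
  have hmin0 : 0 ≤ min 1 δv := le_min zero_le_one hδ
  have hc0 : 0 ≤ c := mul_nonneg hη.le hmin0
  have hc1 : c ≤ 1 := by
    calc c ≤ 1 * min 1 δv := mul_le_mul_of_nonneg_right hη1 hmin0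
    _ = min 1 δv := one_mul _
    _ ≤ 1 := min_le_left _ _
  have hcd : c ≤ δv := le_trans (by
      calc c ≤ 1 * min 1 δv := mul_le_mul_of_nonneg_right hη1 hmin0
      _ = min 1 δv := one_mul _) (min_le_right 1 δv)
  have hk := key_ineq p δv c hp0 hp1 hδ hc0 hc1 hcd
  have h2 : 1 - (1 - Real.exp (-c)) * (p + δv * (p * (1 - p))) ≤ Real.exp (-(c * p)) := by
    nlinarith [hk]
  have h3 := mul_le_mul_of_nonneg_left h2 (Real.exp_pos (c * p)).le
  have h4 : Real.exp (c * p) * Real.exp (-(c * p)) = 1 := by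
    rw [← Real.exp_add]; simp
  have h5 : Real.exp (c * p) * (1 - (1 - Real.exp (-c)) * (p + δv * (p * (1 - p)))) ≤ 1 :=
    le_of_le_of_eq h3 h4
  calc Real.exp (-γ * p) * Real.exp (c * p) *
        (1 - (1 - Real.exp (-c)) * (p + δv * (p * (1 - p))))
      = Real.exp (-γ * p) * (Real.exp (c * p) *
          (1 - (1 - Real.exp (-c)) * (p + δv * (p * (1 - p))))) := by ring
    _ ≤ Real.exp (-γ * p) * 1 := mul_le_mul_of_nonneg_left h5 (Real.exp_pos _).le
    _ = Real.exp (-γ * p) := mul_one _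


lemma limit_dichotomy (γ' : ℕ) (hγ'_pos : 0 < γ') (K l : ℝ) (η δ P E : ℕ → ℝ)
    (hη : ∀ t, η t ∈ Set.Ioc (0:ℝ) 1) (hδ : ∀ t, 0 ≤ δ t)
    (hP : ∀ t, P t ∈ Set.Icc (0:ℝ) 1)
    (hhaz : ∀ t, δ t * (P t * (1 - P t)) ≤ E t - P t)
    (hE : ∀ t, E t ≤ 1)
    (hsum : ∀ n, ∑ t ∈ Finset.range n, η t * (min 1 (δ t) / (γ':ℝ)) * (E t - P t) ≤ K)
    (hdiv : Tendsto (fun n => ∑ t ∈ Finset.range n, η t * δ t ^ 2) atTop atTop)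
    (hlim : Tendsto P atTop (nhds l)) : l = 0 ∨ l = 1 := by
  by_contra hcon
  push_neg at hcon
  obtain ⟨h0, h1⟩ := hcon
  have hγR : (0:ℝ) < γ' := by exact_mod_cast hγ'_pos
  have hl0 : 0 ≤ l := ge_of_tendsto' hlim fun t => (hP t).1
  have hl1 : l ≤ 1 := le_of_tendsto' hlim fun t => (hP t).2
  have hl0' : 0 < l := lt_of_le_of_ne hl0 (Ne.symm h0)
  have hl1' : l < 1 := lt_of_le_of_ne hl1 h1
  set a : ℝ := min l (1 - l) / 2 with ha_def
  have ha : 0 < a := by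
    have := lt_min hl0' (by linarith : (0:ℝ) < 1 - l)
    rw [ha_def]; linarith
  have h2al : 2 * a ≤ l := by
    have := min_le_left l (1 - l); rw [ha_def]; linarith
  have h2a1 : 2 * a ≤ 1 - l := by
    have := min_le_right l (1 - l); rw [ha_def]; linarith
  obtain ⟨T, hT⟩ := (Metric.tendsto_atTop.mp hlim) a ha
  have key : ∀ t, T ≤ t →
      η t * δ t ^ 2 ≤ (γ' / a ^ 3) * (η t * (min 1 (δ t) / γ') * (E t - P t)) := by
    intro t ht
    have hd := hT t ht
    rw [Real.dist_eq, abs_lt] at hd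
    have hPa : a ≤ P t := by linarith
    have hP1 : P t ≤ 1 - a := by linarith
    have hδP : δ t * P t ≤ 1 := by
      have h := hhaz t
      have hE' := hE t
      nlinarith [hδ t, (hP t).1]
    have hmin : a * δ t ≤ min 1 (δ t) := by
      apply le_min
      · nlinarith [hPa, hδ t]
      · nlinarith [hδ t]
    have haa : a * a ≤ P t * (1 - P t) :=
      mul_le_mul hPa (by linarith) ha.le (by linarith [(hP t).1])
    have hEP : δ t * (a * a) ≤ E t - P t :=
      le_trans (mul_le_mul_of_nonneg_left haa (hδ t)) (hhaz t)
    have hη0 := (hη t).1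
    have expand : (γ' / a ^ 3) * (η t * (min 1 (δ t) / γ') * (E t - P t)) =
        η t * min 1 (δ t) * (E t - P t) / a ^ 3 := by
      field_simp
    rw [expand, le_div_iff₀ (by positivity : (0:ℝ) < a ^ 3)]
    have hm0 : 0 ≤ min 1 (δ t) := le_min zero_le_one (hδ t)
    calc η t * δ t ^ 2 * a ^ 3 = η t * ((a * δ t) * (δ t * (a * a))) := by ring
      _ ≤ η t * (min 1 (δ t) * (E t - P t)) := by
          apply mul_le_mul_of_nonneg_left _ hη0.le
          exact mul_le_mul hmin hEP (mul_nonneg (hδ t) (by positivity)) hm0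
      _ = η t * min 1 (δ t) * (E t - P t) := by ring
  have hK0 : 0 ≤ K := le_trans (by simp) (hsum 0)
  have hDnn : ∀ t, 0 ≤ η t * (min 1 (δ t) / γ') * (E t - P t) := by
    intro t
    have h := hhaz t
    have hEP : 0 ≤ E t - P t :=
      le_trans (mul_nonneg (hδ t) (mul_nonneg (hP t).1 (by linarith [(hP t).2]))) h
    have hm0 : 0 ≤ min 1 (δ t) := le_min zero_le_one (hδ t)
    have := (hη t).1
    positivity
  set M : ℝ := (∑ t ∈ Finset.range T, η t * δ t ^ 2) + (γ' / a ^ 3) * K with hM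
  obtain ⟨n, hn1, hn2⟩ : ∃ n, T ≤ n ∧ M + 1 ≤ ∑ t ∈ Finset.range n, η t * δ t ^ 2 := by
    have h1 := hdiv.eventually_ge_atTop (M + 1)
    obtain ⟨n, hn⟩ := ((eventually_ge_atTop T).and h1).exists
    exact ⟨n, hn.1, hn.2⟩
  have hsplit : ∑ t ∈ Finset.range n, η t * δ t ^ 2 =
      ∑ t ∈ Finset.range T, η t * δ t ^ 2 + ∑ t ∈ Finset.Ico T n, η t * δ t ^ 2 := by
    rw [Finset.range_eq_Ico, Finset.range_eq_Ico]
    exact (Finset.sum_Ico_consecutive _ (Nat.zero_le T) hn1).symm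
  have hIco : ∑ t ∈ Finset.Ico T n, η t * δ t ^ 2 ≤ (γ' / a ^ 3) * K := by
    calc ∑ t ∈ Finset.Ico T n, η t * δ t ^ 2
        ≤ ∑ t ∈ Finset.Ico T n,
            (γ' / a ^ 3) * (η t * (min 1 (δ t) / γ') * (E t - P t)) :=
          Finset.sum_le_sum fun t ht => key t (Finset.mem_Ico.mp ht).1
      _ = (γ' / a ^ 3) * ∑ t ∈ Finset.Ico T n, η t * (min 1 (δ t) / γ') * (E t - P t) :=
          (Finset.mul_sum _ _ _).symm
      _ ≤ (γ' / a ^ 3) * ∑ t ∈ Finset.range n, η t * (min 1 (δ t) / γ') * (E t - P t) := by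
          apply mul_le_mul_of_nonneg_left _ (by positivity)
          apply Finset.sum_le_sum_of_subset_of_nonneg
          · rw [Finset.range_eq_Ico]
            exact Finset.Ico_subset_Ico (Nat.zero_le T) le_rfl
          · exact fun t _ _ => hDnn t
      _ ≤ (γ' / a ^ 3) * K := mul_le_mul_of_nonneg_left (hsum n) (by positivity)
  rw [hsplit] at hn2
  rw [hM] at hn2
  linarith

/-- Theorem 1 (slow versions achieve optimality with high probability): if the unslowed
updates `X_{t+1}` satisfy the WBERHR inequality with nonnegative `F_t`-measurable lower
bounds `δ_t` such that `Σ δ_t² = ∞` a.s., `γ'` is the smallest positive integer with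
`e^{−γ' p₀} < ε`, `θ_t = min(1,δ_t)/γ'`, and `η_t ∈ (0,1]` are `F_t`-measurable with
`Σ η_t δ_t² = ∞` a.s., then the slow version
`P_{t+1} = P_t + η_t θ_t (X_{t+1} − P_t)`, `P₀ = p₀ ∈ (0,1]`, converges a.s. and
`ℙ(lim P_t = 1) > 1 − ε`. -/
theorem stmt4 {Ω : Type*} {m : MeasurableSpace Ω} {μ : Measure Ω} [IsProbabilityMeasure μ]
    (𝓕 : Filtration ℕ m) (δ η P X : ℕ → Ω → ℝ) (p₀ ε : ℝ) (γ' : ℕ)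
    (hδ_meas : ∀ t, StronglyMeasurable[𝓕 t] (δ t))
    (hδ_nonneg : ∀ t, ∀ᵐ ω ∂μ, 0 ≤ δ t ω)
    (hδ_sq : ∀ᵐ ω ∂μ,
      Tendsto (fun n => ∑ t ∈ Finset.range n, (δ t ω) ^ 2) atTop atTop)
    (hp₀ : p₀ ∈ Set.Ioc (0 : ℝ) 1) (hε : ε ∈ Set.Ioo (0 : ℝ) 1)
    (hγ'_pos : 0 < γ')
    (hγ' : Real.exp (-(γ' : ℝ) * p₀) < ε)
    (hγ'_min : ∀ k : ℕ, 0 < k → Real.exp (-(k : ℝ) * p₀) < ε → γ' ≤ k)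
    (hη_meas : ∀ t, StronglyMeasurable[𝓕 t] (η t))
    (hη_mem : ∀ t, ∀ᵐ ω ∂μ, η t ω ∈ Set.Ioc (0 : ℝ) 1)
    (hηδ : ∀ᵐ ω ∂μ,
      Tendsto (fun n => ∑ t ∈ Finset.range n, η t ω * (δ t ω) ^ 2) atTop atTop)
    (hP_adapted : ∀ t, StronglyMeasurable[𝓕 t] (P t))
    (hP_mem : ∀ t, ∀ᵐ ω ∂μ, P t ω ∈ Set.Icc (0 : ℝ) 1)
    (hP0 : ∀ ω, P 0 ω = p₀)
    (hX_meas : ∀ t : ℕ, StronglyMeasurable[𝓕 (t + 1)] (X (t + 1)))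
    (hX_mem : ∀ t : ℕ, ∀ᵐ ω ∂μ, X (t + 1) ω ∈ Set.Icc (0 : ℝ) 1)
    (hX_int : ∀ t : ℕ, Integrable (X (t + 1)) μ)
    (hhaz : ∀ t, ∀ᵐ ω ∂μ,
      δ t ω * (P t ω * (1 - P t ω)) ≤ (μ[X (t + 1)|𝓕 t]) ω - P t ω)
    (hrec : ∀ t, ∀ᵐ ω ∂μ,
      P (t + 1) ω = P t ω + η t ω * (min 1 (δ t ω) / (γ' : ℝ)) * (X (t + 1) ω - P t ω)) :
    (∀ᵐ ω ∂μ, ∃ l : ℝ, Tendsto (fun t => P t ω) atTop (nhds l)) ∧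
      ENNReal.ofReal (1 - ε) < μ {ω | Tendsto (fun t => P t ω) atTop (nhds 1)} := by
  have hγ1 : (1:ℝ) ≤ (γ' : ℝ) := by exact_mod_cast hγ'_pos
  have hγR : (0:ℝ) < (γ' : ℝ) := by linarith
  -- abbreviations
  set θ : ℕ → Ω → ℝ := fun t ω => η t ω * (min 1 (δ t ω) / (γ' : ℝ)) with hθdef
  set Ec : ℕ → Ω → ℝ := fun t => μ[X (t + 1)|𝓕 t] with hEcdef
  set D : ℕ → Ω → ℝ := fun t ω => θ t ω * (Ec t ω - P t ω) with hDdef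
  set c : ℕ → Ω → ℝ := fun t ω => η t ω * min 1 (δ t ω) with hcdef
  set g : ℕ → Ω → ℝ := fun t ω => Real.exp (-(γ' : ℝ) * P t ω) with hgdef
  -- measurability
  have hηM : ∀ t, Measurable[𝓕 t] (η t) := fun t => (hη_meas t).measurable
  have hδM : ∀ t, Measurable[𝓕 t] (δ t) := fun t => (hδ_meas t).measurable
  have hPM : ∀ t, Measurable[𝓕 t] (P t) := fun t => (hP_adapted t).measurable
  have hθM : ∀ t, Measurable[𝓕 t] (θ t) := fun t =>
    (hηM t).mul ((measurable_const.min (hδM t)).div_const _)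
  have hcM : ∀ t, Measurable[𝓕 t] (c t) := fun t =>
    (hηM t).mul (measurable_const.min (hδM t))
  have hEcSM : ∀ t, StronglyMeasurable[𝓕 t] (Ec t) := fun t => stronglyMeasurable_condExp
  have mPM : ∀ t, Measurable (P t) := fun t => (hPM t).mono (𝓕.le t) le_rfl
  have mXM : ∀ t, Measurable (X (t + 1)) := fun t =>
    (hX_meas t).measurable.mono (𝓕.le (t + 1)) le_rfl
  have mηM : ∀ t, Measurable (η t) := fun t => (hηM t).mono (𝓕.le t) le_rfl
  have mδM : ∀ t, Measurable (δ t) := fun t => (hδM t).mono (𝓕.le t) le_rfl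
  have mθM : ∀ t, Measurable (θ t) := fun t => (hθM t).mono (𝓕.le t) le_rfl
  have mcM : ∀ t, Measurable (c t) := fun t => (hcM t).mono (𝓕.le t) le_rfl
  have mEcM : ∀ t, Measurable (Ec t) := fun t =>
    (hEcSM t).measurable.mono (𝓕.le t) le_rfl
  have mDM : ∀ t, Measurable (D t) := fun t => (mθM t).mul ((mEcM t).sub (mPM t))
  have mgM : ∀ t, Measurable (g t) := fun t => (Real.measurable_exp.comp
    ((mPM t).const_mul _))
  -- integrability helper
  have hbint : ∀ {f : Ω → ℝ} (C : ℝ), AEStronglyMeasurable f μ →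
      (∀ᵐ ω ∂μ, |f ω| ≤ C) → Integrable f μ := by
    intro f C hmeas hb
    exact (integrable_const C).mono' hmeas (by simpa [Real.norm_eq_abs] using hb)
  -- the big a.e. bundle
  have hgood : ∀ t, ∀ᵐ ω ∂μ, η t ω ∈ Set.Ioc (0:ℝ) 1 ∧ 0 ≤ δ t ω ∧
      P t ω ∈ Set.Icc (0:ℝ) 1 ∧ X (t+1) ω ∈ Set.Icc (0:ℝ) 1 ∧
      δ t ω * (P t ω * (1 - P t ω)) ≤ Ec t ω - P t ω ∧
      P (t+1) ω = P t ω + θ t ω * (X (t+1) ω - P t ω) ∧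
      Ec t ω ≤ 1 ∧ 0 ≤ Ec t ω ∧ P (t+1) ω ∈ Set.Icc (0:ℝ) 1 := by
    intro t
    have hE1 : Ec t ≤ᵐ[μ] fun _ => (1:ℝ) := by
      have h := condExp_mono (m := 𝓕 t) (hX_int t) (integrable_const (1:ℝ))
        ((hX_mem t).mono fun ω h => h.2)
      rw [condExp_const (𝓕.le t)] at h
      exact h
    have hE0 : (0:Ω → ℝ) ≤ᵐ[μ] Ec t :=
      condExp_nonneg ((hX_mem t).mono fun ω h => h.1)
    filter_upwards [hη_mem t, hδ_nonneg t, hP_mem t, hX_mem t, hhaz t, hrec t,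
      hE1, hE0, hP_mem (t+1)] with ω h1 h2 h3 h4 h5 h6 h7 h8 h9
    exact ⟨h1, h2, h3, h4, h5, h6, h7, h8, h9⟩
  -- basic integrability
  have hPint : ∀ t, Integrable (P t) μ := by
    intro t
    refine hbint 1 (mPM t).aestronglyMeasurable ?_
    filter_upwards [hP_mem t] with ω h
    rw [abs_le]; exact ⟨by linarith [h.1], h.2⟩
  have hEcint : ∀ t, Integrable (Ec t) μ := fun t => integrable_condExp
  have hθ_bdd : ∀ t, ∀ᵐ ω ∂μ, 0 ≤ θ t ω ∧ θ t ω ≤ 1 := by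
    intro t
    filter_upwards [hgood t] with ω h
    obtain ⟨h1, h2, _⟩ := h
    have hmin0 : 0 ≤ min 1 (δ t ω) := le_min zero_le_one h2
    have hmin1 : min 1 (δ t ω) ≤ 1 := min_le_left _ _
    have hd1 : min 1 (δ t ω) / (γ':ℝ) ≤ 1 := (div_le_one hγR).mpr (hmin1.trans hγ1)
    have hd0 : 0 ≤ min 1 (δ t ω) / (γ':ℝ) := div_nonneg hmin0 hγR.le
    exact ⟨mul_nonneg h1.1.le hd0, mul_le_one₀ h1.2 hd0 hd1⟩
  -- conditional expectation computation
  have hCE : ∀ t, μ[P (t + 1)|𝓕 t] =ᵐ[μ] fun ω => P t ω + D t ω := by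
    intro t
    set g1 : Ω → ℝ := fun ω => P t ω - θ t ω * P t ω with hg1
    have hg1int : Integrable g1 μ := by
      refine hbint 2 ((mPM t).sub ((mθM t).mul (mPM t))).aestronglyMeasurable ?_
      filter_upwards [hgood t, hθ_bdd t] with ω h hθ
      have := h.2.2.1
      simp only [hg1]
      rw [abs_le]
      constructor <;> nlinarith [this.1, this.2, hθ.1, hθ.2]
    have hg2int : Integrable (θ t * X (t + 1)) μ := by
      refine hbint 1 ((mθM t).mul (mXM t)).aestronglyMeasurable ?_
      filter_upwards [hgood t, hθ_bdd t] with ω h hθ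
      have hx := h.2.2.2.1
      rw [Pi.mul_apply, abs_le]
      constructor <;> nlinarith [hx.1, hx.2, hθ.1, hθ.2]
    have h1 : P (t + 1) =ᵐ[μ] g1 + θ t * X (t + 1) := by
      filter_upwards [hgood t] with ω h
      simp only [Pi.add_apply, Pi.mul_apply, hg1]
      rw [h.2.2.2.2.2.1]; ring
    have h2 := condExp_congr_ae (m := 𝓕 t) h1
    have h3 := condExp_add (m := 𝓕 t) hg1int hg2int
    have h4 : μ[g1|𝓕 t] = g1 :=
      condExp_of_stronglyMeasurable (𝓕.le t)
        (((hPM t).sub ((hθM t).mul (hPM t))).stronglyMeasurable) hg1int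
    have h5 : μ[θ t * X (t + 1)|𝓕 t] =ᵐ[μ] θ t * μ[X (t + 1)|𝓕 t] :=
      condExp_mul_of_stronglyMeasurable_left ((hθM t).stronglyMeasurable) hg2int (hX_int t)
    refine h2.trans (h3.trans ?_)
    rw [h4]
    filter_upwards [h5] with ω h5ω
    simp only [Pi.add_apply, Pi.mul_apply] at h5ω ⊢
    rw [h5ω]
    simp only [hDdef, hg1, hEcdef]
    ring
  -- submartingale
  have hDnn_ae : ∀ t, ∀ᵐ ω ∂μ, 0 ≤ D t ω := by
    intro t
    filter_upwards [hgood t, hθ_bdd t] with ω h hθ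
    have hEP : 0 ≤ Ec t ω - P t ω :=
      le_trans (mul_nonneg h.2.1 (mul_nonneg h.2.2.1.1 (by linarith [h.2.2.1.2]))) h.2.2.2.2.1
    exact mul_nonneg hθ.1 hEP
  have hsubm : ∀ t, P t ≤ᵐ[μ] μ[P (t + 1)|𝓕 t] := by
    intro t
    filter_upwards [hCE t, hDnn_ae t] with ω h1 h2
    rw [h1]; linarith
  have hsub : Submartingale P 𝓕 μ := submartingale_nat (fun t => hP_adapted t) hPint hsubm
  have hbdd : ∀ n, eLpNorm (P n) 1 μ ≤ (1 : ℝ≥0) := by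
    intro n
    have h := eLpNorm_le_of_ae_bound (p := 1) (μ := μ) (C := 1)
      ((hP_mem n).mono fun ω hω => by
        rw [Real.norm_eq_abs, abs_le]; exact ⟨by linarith [hω.1], hω.2⟩)
    simpa using h
  have part1 : ∀ᵐ ω ∂μ, ∃ l : ℝ, Tendsto (fun t => P t ω) atTop (nhds l) :=
    hsub.exists_ae_tendsto_of_bdd hbdd
  -- drift sums
  have hDint : ∀ t, Integrable (D t) μ := by
    intro t
    refine hbint 2 (mDM t).aestronglyMeasurable ?_
    filter_upwards [hgood t, hθ_bdd t] with ω h hθ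
    have hE1 := h.2.2.2.2.2.2.1
    have hE0 := h.2.2.2.2.2.2.2.1
    have hp := h.2.2.1
    simp only [hDdef]
    rw [abs_le]
    constructor <;> nlinarith [hθ.1, hθ.2, hp.1, hp.2]
  have hIntEq : ∀ t, ∫ ω, D t ω ∂μ = (∫ ω, P (t+1) ω ∂μ) - ∫ ω, P t ω ∂μ := by
    intro t
    have h1 : ∫ ω, (μ[P (t + 1)|𝓕 t]) ω ∂μ = ∫ ω, P (t+1) ω ∂μ :=
      integral_condExp (𝓕.le t)
    have h2 : ∫ ω, (μ[P (t + 1)|𝓕 t]) ω ∂μ = ∫ ω, (P t ω + D t ω) ∂μ :=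
      integral_congr_ae (hCE t)
    have h3 : ∫ ω, (P t ω + D t ω) ∂μ = (∫ ω, P t ω ∂μ) + ∫ ω, D t ω ∂μ :=
      integral_add (hPint t) (hDint t)
    rw [h2, h3] at h1
    linarith
  have hP0int : ∫ ω, P 0 ω ∂μ = p₀ := by
    have : P 0 = fun _ => p₀ := funext hP0
    rw [this]
    simp
  have hPle1 : ∀ n, ∫ ω, P n ω ∂μ ≤ 1 := by
    intro n
    have h := integral_mono_ae (hPint n) (integrable_const (1:ℝ))
      ((hP_mem n).mono fun ω hω => hω.2)
    simpa using h
  have hsumle : ∀ n, ∑ t ∈ Finset.range n, ∫ ω, D t ω ∂μ ≤ 1 := by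
    intro n
    have h1 : ∑ t ∈ Finset.range n, ∫ ω, D t ω ∂μ =
        (∫ ω, P n ω ∂μ) - ∫ ω, P 0 ω ∂μ := by
      rw [Finset.sum_congr rfl fun t _ => hIntEq t]
      exact Finset.sum_range_sub (fun t => ∫ ω, P t ω ∂μ) n
    rw [h1, hP0int]
    linarith [hPle1 n, hp₀.1]
  have hDlint : ∀ t, ∫⁻ ω, ENNReal.ofReal (D t ω) ∂μ = ENNReal.ofReal (∫ ω, D t ω ∂μ) :=
    fun t => (ofReal_integral_eq_lintegral_ofReal (hDint t) (hDnn_ae t)).symm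
  have htsumlt : ∀ᵐ ω ∂μ, (∑' t, ENNReal.ofReal (D t ω)) < ⊤ := by
    apply ae_lt_top (Measurable.ennreal_tsum fun t => ENNReal.measurable_ofReal.comp (mDM t))
    rw [lintegral_tsum fun t => (ENNReal.measurable_ofReal.comp (mDM t)).aemeasurable]
    have hle : (∑' t, ∫⁻ ω, ENNReal.ofReal (D t ω) ∂μ) ≤ 1 := by
      rw [ENNReal.tsum_eq_iSup_sum]
      apply iSup_le
      intro s
      obtain ⟨n, hn⟩ := s.exists_nat_subset_range
      calc ∑ t ∈ s, ∫⁻ ω, ENNReal.ofReal (D t ω) ∂μ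
          ≤ ∑ t ∈ Finset.range n, ∫⁻ ω, ENNReal.ofReal (D t ω) ∂μ :=
            Finset.sum_le_sum_of_subset hn
        _ = ∑ t ∈ Finset.range n, ENNReal.ofReal (∫ ω, D t ω ∂μ) := by
            exact Finset.sum_congr rfl fun t _ => hDlint t
        _ = ENNReal.ofReal (∑ t ∈ Finset.range n, ∫ ω, D t ω ∂μ) :=
            (ENNReal.ofReal_sum_of_nonneg fun t _ =>
              integral_nonneg_of_ae (hDnn_ae t)).symm
        _ ≤ ENNReal.ofReal 1 := ENNReal.ofReal_le_ofReal (hsumle n)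
        _ = 1 := ENNReal.ofReal_one
    exact ne_top_of_le_ne_top ENNReal.one_ne_top hle
  -- dichotomy
  have hdich : ∀ᵐ ω ∂μ, ∀ l : ℝ, Tendsto (fun t => P t ω) atTop (nhds l) →
      l = 0 ∨ l = 1 := by
    filter_upwards [htsumlt, hηδ, ae_all_iff.mpr hgood, ae_all_iff.mpr hθ_bdd]
      with ω hfin hdiv hg hθb
    intro l hliml
    have hDnn : ∀ t, 0 ≤ D t ω := by
      intro t
      have h := hg t
      have hEP : 0 ≤ Ec t ω - P t ω :=
        le_trans (mul_nonneg h.2.1 (mul_nonneg h.2.2.1.1 (by linarith [h.2.2.1.2])))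
          h.2.2.2.2.1
      exact mul_nonneg (hθb t).1 hEP
    refine limit_dichotomy γ' hγ'_pos ((∑' t, ENNReal.ofReal (D t ω)).toReal) l
      (fun t => η t ω) (fun t => δ t ω) (fun t => P t ω) (fun t => Ec t ω)
      (fun t => (hg t).1) (fun t => (hg t).2.1) (fun t => (hg t).2.2.1)
      (fun t => (hg t).2.2.2.2.1) (fun t => (hg t).2.2.2.2.2.2.1) ?_ hdiv hliml
    intro n
    have heq : ∑ t ∈ Finset.range n, η t ω * (min 1 (δ t ω) / (γ':ℝ)) * (Ec t ω - P t ω)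
        = ∑ t ∈ Finset.range n, D t ω := rfl
    rw [heq]
    have hnn : 0 ≤ ∑ t ∈ Finset.range n, D t ω :=
      Finset.sum_nonneg fun t _ => hDnn t
    calc ∑ t ∈ Finset.range n, D t ω
        = (ENNReal.ofReal (∑ t ∈ Finset.range n, D t ω)).toReal :=
          (ENNReal.toReal_ofReal hnn).symm
      _ = (∑ t ∈ Finset.range n, ENNReal.ofReal (D t ω)).toReal := by
          rw [ENNReal.ofReal_sum_of_nonneg fun t _ => hDnn t]
      _ ≤ (∑' t, ENNReal.ofReal (D t ω)).toReal := by
          apply ENNReal.toReal_mono hfin.ne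
          exact Summable.sum_le_tsum _ (fun t _ => zero_le) ENNReal.summable
  -- exp supermartingale in expectation
  have hgint : ∀ t, Integrable (g t) μ := by
    intro t
    refine hbint 1 (mgM t).aestronglyMeasurable ?_
    filter_upwards [hP_mem t] with ω h
    rw [abs_of_pos (Real.exp_pos _)]
    apply Real.exp_le_one_iff.mpr
    nlinarith [h.1, hγR]
  have hstep : ∀ t, ∫ ω, g (t+1) ω ∂μ ≤ ∫ ω, g t ω ∂μ := by
    intro t
    set Af : Ω → ℝ := fun ω => g t ω * Real.exp (c t ω * P t ω) with hAf
    set Bf : Ω → ℝ := fun ω => g t ω * Real.exp (c t ω * P t ω) *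
      (1 - Real.exp (-(c t ω))) with hBf
    set q : Ω → ℝ := fun ω => P t ω + δ t ω * (P t ω * (1 - P t ω)) with hq
    have mAf : Measurable Af := (mgM t).mul (Real.measurable_exp.comp ((mcM t).mul (mPM t)))
    have mBf : Measurable Bf := mAf.mul
      (measurable_const.sub (Real.measurable_exp.comp (mcM t).neg))
    have mq : Measurable q := (mPM t).add ((mδM t).mul ((mPM t).mul
      (measurable_const.sub (mPM t))))
    -- a.e. bounds for c
    have hc_bdd : ∀ᵐ ω ∂μ, 0 ≤ c t ω ∧ c t ω ≤ 1 := by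
      filter_upwards [hgood t] with ω h
      have hmin0 : 0 ≤ min 1 (δ t ω) := le_min zero_le_one h.2.1
      have hmin1 : min 1 (δ t ω) ≤ 1 := min_le_left _ _
      exact ⟨mul_nonneg h.1.1.le hmin0, mul_le_one₀ h.1.2 hmin0 hmin1⟩
    have hg_bdd : ∀ᵐ ω ∂μ, 0 < g t ω ∧ g t ω ≤ 1 := by
      filter_upwards [hP_mem t] with ω h
      refine ⟨Real.exp_pos _, Real.exp_le_one_iff.mpr (by nlinarith [h.1, hγR])⟩
    have hecP : ∀ᵐ ω ∂μ, (1:ℝ) ≤ Real.exp (c t ω * P t ω) ∧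
        Real.exp (c t ω * P t ω) ≤ 3 := by
      filter_upwards [hc_bdd, hP_mem t] with ω hc hp
      constructor
      · rw [show (1:ℝ) = Real.exp 0 by simp]
        exact Real.exp_le_exp.mpr (mul_nonneg hc.1 hp.1)
      · calc Real.exp (c t ω * P t ω) ≤ Real.exp 1 :=
            Real.exp_le_exp.mpr (by nlinarith [hc.1, hc.2, hp.1, hp.2])
          _ ≤ 3 := (Real.exp_one_lt_d9.trans_le (by norm_num)).le
    have hemc : ∀ᵐ ω ∂μ, 0 ≤ 1 - Real.exp (-(c t ω)) ∧ 1 - Real.exp (-(c t ω)) ≤ 1 := by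
      filter_upwards [hc_bdd] with ω hc
      constructor
      · have : Real.exp (-(c t ω)) ≤ 1 := Real.exp_le_one_iff.mpr (by linarith [hc.1])
        linarith
      · have := Real.exp_pos (-(c t ω))
        linarith
    have hq_bdd : ∀ᵐ ω ∂μ, 0 ≤ q ω ∧ q ω ≤ 2 := by
      filter_upwards [hgood t] with ω h
      have hp := h.2.2.1
      have hE1 := h.2.2.2.2.2.2.1
      have hhz := h.2.2.2.2.1
      constructor
      · have : 0 ≤ δ t ω * (P t ω * (1 - P t ω)) :=
          mul_nonneg h.2.1 (mul_nonneg hp.1 (by linarith [hp.2]))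
        simp only [hq]; linarith [hp.1, this]
      · simp only [hq]; nlinarith [hp.1, hp.2]
    have hB_bdd : ∀ᵐ ω ∂μ, 0 ≤ Bf ω ∧ Bf ω ≤ 3 := by
      filter_upwards [hg_bdd, hecP, hemc] with ω h1 h2 h3
      simp only [hBf]
      constructor
      · exact mul_nonneg (mul_nonneg h1.1.le (by linarith [h2.1])) h3.1
      · have hge : 0 ≤ g t ω * Real.exp (c t ω * P t ω) :=
          mul_nonneg h1.1.le (by linarith [h2.1])
        have hAB : g t ω * Real.exp (c t ω * P t ω) ≤ 3 := by
          nlinarith [h1.1, h1.2, h2.1, h2.2]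
        nlinarith [mul_le_mul_of_nonneg_left h3.2 hge, hge, hAB, h3.1]
    have intAf : Integrable Af μ := by
      refine hbint 3 mAf.aestronglyMeasurable ?_
      filter_upwards [hg_bdd, hecP] with ω h1 h2
      simp only [hAf]
      rw [abs_le]
      constructor <;> nlinarith [h1.1, h1.2, h2.1, h2.2]
    have intBfX : Integrable (fun ω => Bf ω * X (t+1) ω) μ := by
      refine hbint 3 (mBf.mul (mXM t)).aestronglyMeasurable ?_
      filter_upwards [hB_bdd, hX_mem t] with ω h1 h2
      rw [abs_le]
      constructor <;> nlinarith [h1.1, h1.2, h2.1, h2.2]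
    have intBfq : Integrable (fun ω => Bf ω * q ω) μ := by
      refine hbint 6 (mBf.mul mq).aestronglyMeasurable ?_
      filter_upwards [hB_bdd, hq_bdd] with ω h1 h2
      rw [abs_le]
      constructor <;> nlinarith [h1.1, h1.2, h2.1, h2.2]
    have intBfE : Integrable (fun ω => Bf ω * Ec t ω) μ := by
      refine hbint 3 (mBf.mul (mEcM t)).aestronglyMeasurable ?_
      filter_upwards [hB_bdd, hgood t] with ω h1 h2
      have hE1 := h2.2.2.2.2.2.2.1
      have hE0 := h2.2.2.2.2.2.2.2.1
      rw [abs_le]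
      constructor <;> nlinarith [h1.1, h1.2]
    have intAmBX : Integrable (fun ω => Af ω - Bf ω * X (t+1) ω) μ :=
      intAf.sub intBfX
    -- step 1: pointwise chord bound
    have h1 : ∫ ω, g (t+1) ω ∂μ ≤ ∫ ω, (Af ω - Bf ω * X (t+1) ω) ∂μ := by
      apply integral_mono_ae (hgint (t+1)) intAmBX
      filter_upwards [hgood t] with ω h
      have hs := step1_aux (γ':ℝ) (η t ω) (δ t ω) (P t ω) (X (t+1) ω) hγ1
        h.1.1 h.1.2 h.2.1 h.2.2.2.1.1 h.2.2.2.1.2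
      have heq : g (t+1) ω = Real.exp (-(γ':ℝ) * (P t ω + η t ω *
          (min 1 (δ t ω) / (γ':ℝ)) * (X (t+1) ω - P t ω))) := by
        simp only [hgdef]
        rw [h.2.2.2.2.2.1]
      rw [heq]
      refine le_trans hs (le_of_eq ?_)
      simp only [Pi.sub_apply, hAf, hBf, hcdef, hgdef]
      ring_nf
    -- step 2: conditional expectation
    have hBfSM : StronglyMeasurable[𝓕 t] Bf := by
      apply Measurable.stronglyMeasurable
      exact (((Real.measurable_exp.comp ((hPM t).const_mul _)).mul
        (Real.measurable_exp.comp ((hcM t).mul (hPM t)))).mul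
        (measurable_const.sub (Real.measurable_exp.comp (hcM t).neg)))
    have h2 : ∫ ω, Bf ω * X (t+1) ω ∂μ = ∫ ω, Bf ω * Ec t ω ∂μ := by
      have hmul := condExp_mul_of_stronglyMeasurable_left hBfSM
        (show Integrable (Bf * X (t+1)) μ from intBfX) (hX_int t)
      calc ∫ ω, Bf ω * X (t+1) ω ∂μ = ∫ ω, (μ[Bf * X (t+1)|𝓕 t]) ω ∂μ :=
            (integral_condExp (𝓕.le t)).symm
        _ = ∫ ω, (Bf * μ[X (t+1)|𝓕 t]) ω ∂μ := integral_congr_ae hmul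
        _ = ∫ ω, Bf ω * Ec t ω ∂μ := rfl
    have h3 : ∫ ω, Bf ω * q ω ∂μ ≤ ∫ ω, Bf ω * Ec t ω ∂μ := by
      apply integral_mono_ae intBfq intBfE
      filter_upwards [hB_bdd, hgood t] with ω h1' h2'
      have hqE : q ω ≤ Ec t ω := by
        have := h2'.2.2.2.2.1
        simp only [hq]; linarith [this]
      exact mul_le_mul_of_nonneg_left hqE h1'.1
    have h4 : ∫ ω, (Af ω - Bf ω * q ω) ∂μ ≤ ∫ ω, g t ω ∂μ := by
      apply integral_mono_ae (intAf.sub intBfq) (hgint t)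
      filter_upwards [hgood t] with ω h
      have hs := step2_aux (γ':ℝ) (η t ω) (δ t ω) (P t ω)
        h.1.1 h.1.2 h.2.1 h.2.2.1.1 h.2.2.1.2
      refine le_trans (le_of_eq ?_) hs
      simp only [Pi.sub_apply, hAf, hBf, hq, hcdef, hgdef]
      ring_nf
    calc ∫ ω, g (t+1) ω ∂μ ≤ ∫ ω, (Af ω - Bf ω * X (t+1) ω) ∂μ := h1
      _ = (∫ ω, Af ω ∂μ) - ∫ ω, Bf ω * X (t+1) ω ∂μ := integral_sub intAf intBfX
      _ = (∫ ω, Af ω ∂μ) - ∫ ω, Bf ω * Ec t ω ∂μ := by rw [h2]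
      _ ≤ (∫ ω, Af ω ∂μ) - ∫ ω, Bf ω * q ω ∂μ := by linarith [h3]
      _ = ∫ ω, (Af ω - Bf ω * q ω) ∂μ := (integral_sub intAf intBfq).symm
      _ ≤ ∫ ω, g t ω ∂μ := h4
  have hg0 : ∫ ω, g 0 ω ∂μ = Real.exp (-(γ':ℝ) * p₀) := by
    have heq : g 0 = fun _ => Real.exp (-(γ':ℝ) * p₀) := by
      funext ω
      simp only [hgdef, hP0 ω]
    rw [heq]
    simp
  have hI : ∀ t, ∫ ω, g t ω ∂μ ≤ Real.exp (-(γ':ℝ) * p₀) := by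
    intro t
    induction t with
    | zero => exact le_of_eq hg0
    | succ n ih => exact le_trans (hstep n) ih
  -- final
  set S : Set Ω := {ω | Tendsto (fun t => P t ω) atTop (nhds 1)} with hS
  have hSm : MeasurableSet S := measurableSet_tendsto (nhds (1:ℝ)) fun t => mPM t
  have hSc : ∀ᵐ ω ∂μ, ω ∉ S → Tendsto (fun t => P t ω) atTop (nhds 0) := by
    filter_upwards [part1, hdich] with ω h1 h2 hnot
    obtain ⟨l, hl⟩ := h1
    rcases h2 l hl with h | h
    · rwa [h] at hl
    · rw [h] at hl
      exact absurd hl hnot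
  have hind : ∀ᵐ ω ∂μ, Sᶜ.indicator (fun _ => (1:ℝ≥0∞)) ω ≤
      liminf (fun t => ENNReal.ofReal (g t ω)) atTop := by
    filter_upwards [hSc] with ω h
    by_cases hω : ω ∈ S
    · rw [Set.indicator_of_notMem (by simpa using hω)]
      exact zero_le
    · have htend : Tendsto (fun t => g t ω) atTop (nhds (Real.exp (-(γ':ℝ) * 0))) := by
        apply (Real.continuous_exp.tendsto _).comp
        exact (h hω).const_mul _
      have htend2 : Tendsto (fun t => ENNReal.ofReal (g t ω)) atTop
          (nhds (ENNReal.ofReal (Real.exp (-(γ':ℝ) * 0)))) :=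
        (ENNReal.continuous_ofReal.tendsto _).comp htend
      rw [htend2.liminf_eq]
      rw [Set.indicator_of_mem (by simpa using hω)]
      simp
  have hlim_le : μ Sᶜ ≤ ENNReal.ofReal (Real.exp (-(γ':ℝ) * p₀)) := by
    calc μ Sᶜ = ∫⁻ ω, Sᶜ.indicator (fun _ => (1:ℝ≥0∞)) ω ∂μ :=
          (lintegral_indicator_one hSm.compl).symm
      _ ≤ ∫⁻ ω, liminf (fun t => ENNReal.ofReal (g t ω)) atTop ∂μ :=
          lintegral_mono_ae hind
      _ ≤ liminf (fun t => ∫⁻ ω, ENNReal.ofReal (g t ω) ∂μ) atTop :=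
          lintegral_liminf_le fun t => ENNReal.measurable_ofReal.comp (mgM t)
      _ ≤ ENNReal.ofReal (Real.exp (-(γ':ℝ) * p₀)) := by
          have hb : ∀ t, ∫⁻ ω, ENNReal.ofReal (g t ω) ∂μ ≤
              ENNReal.ofReal (Real.exp (-(γ':ℝ) * p₀)) := by
            intro t
            rw [← ofReal_integral_eq_lintegral_ofReal (hgint t)
              (Eventually.of_forall fun ω => (Real.exp_pos _).le)]
            exact ENNReal.ofReal_le_ofReal (hI t)
          calc liminf (fun t => ∫⁻ ω, ENNReal.ofReal (g t ω) ∂μ) atTop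
              ≤ liminf (fun _ : ℕ => ENNReal.ofReal (Real.exp (-(γ':ℝ) * p₀))) atTop :=
                liminf_le_liminf (Eventually.of_forall hb)
            _ = ENNReal.ofReal (Real.exp (-(γ':ℝ) * p₀)) := liminf_const _
  have hSc_lt : μ Sᶜ < ENNReal.ofReal ε :=
    lt_of_le_of_lt hlim_le ((ENNReal.ofReal_lt_ofReal_iff hε.1).mpr hγ')
  refine ⟨part1, ?_⟩
  by_contra hle
  rw [not_lt] at hle
  have hsum := measure_add_measure_compl (μ := μ) hSm
  rw [measure_univ] at hsum
  have hlt : μ S + μ Sᶜ < ENNReal.ofReal (1 - ε) + ENNReal.ofReal ε :=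
    ENNReal.add_lt_add_of_le_of_lt (measure_ne_top μ S) hle hSc_lt
  rw [hsum, ← ENNReal.ofReal_add (by linarith [hε.2]) hε.1.le] at hlt
  simp only [sub_add_cancel, ENNReal.ofReal_one] at hlt
  exact absurd hlt (lt_irrefl _)
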